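/- arXiv:math-ph/0204009 — 2 statements merged into one kernel-verified Lean document; each statement's English description precedes it below -/
import Mathlib

section
/- If P_{Ψ_N} is the rank-one orthogonal projector onto the span of a Slater determinant Ψ_N ∈ A_N built from N orthonormal vectors of H, then for every n ≤ N its n-th partial trace satisfies (P_{Ψ_N})_{:n} = (N^n (N−n)!/N!) · ((P_{Ψ_N})_{:1})^{⊗n} · Σ_n, where Σ_n = ∑_{π∈Π_n} sgn(π)U_π. -/
noncomputable section

open scoped ENNReal
open ContinuousLinearMap

local notation "⟪" x ", " y "⟫" => @inner ℂ _ _ x y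

section AuxLemmas

lemma hasSum_prod_pi {J : Type*} {m : ℕ} (f : Fin m → J → ℂ) (a : Fin m → ℂ)
    (h : ∀ t, HasSum (f t) (a t)) :
    HasSum (fun z : Fin m → J => ∏ t, f t (z t)) (∏ t, a t) := by
  induction m with
  | zero =>
      have : HasSum (fun z : Fin 0 → J => ∏ t, f t (z t))
          ((fun z : Fin 0 → J => ∏ t, f t (z t)) default) :=
        hasSum_single default (fun b' hb' => absurd (Subsingleton.elim b' default) hb')
      simpa using this
  | succ m ih =>
      have h1 : HasSum (f 0) (a 0) := h 0
      have h2 := ih (fun t => f t.succ) (fun t => a t.succ) (fun t => h t.succ)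
      have hs : Summable fun p : J × (Fin m → J) => f 0 p.1 * ∏ t, f t.succ (p.2 t) := by
        rw [← summable_norm_iff]
        simpa [norm_mul] using
          (summable_norm_iff.mpr h1.summable).mul_norm (summable_norm_iff.mpr h2.summable)
      have h3 := h1.mul h2 hs
      have h4 := (Fin.consEquiv fun _ : Fin (m + 1) => J).symm.hasSum_iff.mpr h3
      rw [Fin.prod_univ_succ]
      convert h4 using 2 with z
      · rfl
      · rw [Fin.prod_univ_succ]
        rfl

lemma ext_of_dense {E : Type*} [NormedAddCommGroup E] [InnerProductSpace ℂ E]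
    {s : Set E} (hs : Dense (Submodule.span ℂ s : Set E))
    (T T' : E →L[ℂ] E)
    (h : ∀ v ∈ s, ∀ w ∈ s, ⟪T v, w⟫ = ⟪T' v, w⟫) : T = T' := by
  have key : ∀ u : E, (∀ w ∈ s, ⟪u, w⟫ = 0) → u = 0 := by
    intro u hu
    have hsub : (Submodule.span ℂ s : Set E) ⊆ {w | ⟪u, w⟫ = 0} := by
      intro w hw
      induction hw using Submodule.span_induction with
      | mem x hx => exact hu x hx
      | zero => simp
      | add x y _ _ hx hy =>
          simp only [Set.mem_setOf_eq] at hx hy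
          simp [inner_add_right, hx, hy]
      | smul c x _ hx =>
          simp only [Set.mem_setOf_eq] at hx
          simp [inner_smul_right, hx]
    have hclosed : IsClosed {w : E | ⟪u, w⟫ = 0} :=
      isClosed_eq (innerSL ℂ u).continuous continuous_const
    have hall : ∀ w : E, ⟪u, w⟫ = 0 := by
      intro w
      have hw : w ∈ closure (Submodule.span ℂ s : Set E) := by
        rw [hs.closure_eq]; trivial
      exact closure_minimal hsub hclosed hw
    exact inner_self_eq_zero.mp (hall u)
  have hv : ∀ v ∈ s, T v = T' v := by
    intro v hvmem
    refine sub_eq_zero.mp (key _ fun w hw => ?_)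
    rw [inner_sub_left, h v hvmem w hw, sub_self]
  have hsub : (Submodule.span ℂ s : Set E) ⊆ {v | T v = T' v} := by
    intro v hvspan
    induction hvspan using Submodule.span_induction with
    | mem x hx => exact hv x hx
    | zero => simp
    | add x y _ _ hx hy =>
        simp only [Set.mem_setOf_eq] at hx hy
        simp [map_add, hx, hy]
    | smul c x _ hx =>
        simp only [Set.mem_setOf_eq] at hx
        simp [map_smul, hx]
  have hclosed : IsClosed {v : E | T v = T' v} := isClosed_eq T.continuous T'.continuous
  ext v
  exact closure_minimal hsub hclosed (by rw [hs.closure_eq]; trivial)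

lemma exists_perm_comp {α β : Type*} [Fintype α] [DecidableEq α] [Fintype β] [DecidableEq β]
    (ι κ : α → β) (hι : Function.Injective ι) (hκ : Function.Injective κ) :
    ∃ σ : Equiv.Perm β, ⇑σ ∘ ι = κ := by
  classical
  have hcard : Fintype.card ((Set.range ι)ᶜ : Set β) = Fintype.card ((Set.range κ)ᶜ : Set β) := by
    rw [Fintype.card_compl_set, Fintype.card_compl_set,
      Set.card_range_of_injective hι, Set.card_range_of_injective hκ]
  obtain ⟨τ⟩ : Nonempty (((Set.range ι)ᶜ : Set β) ≃ ((Set.range κ)ᶜ : Set β)) :=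
    ⟨Fintype.equivOfCardEq hcard⟩
  refine ⟨(Equiv.Set.sumCompl (Set.range ι)).symm.trans
    ((Equiv.sumCongr ((Equiv.ofInjective ι hι).symm.trans (Equiv.ofInjective κ hκ)) τ).trans
      (Equiv.Set.sumCompl (Set.range κ))), ?_⟩
  funext a
  simp only [Function.comp_apply, Equiv.trans_apply]
  rw [Equiv.Set.sumCompl_symm_apply_of_mem (Set.mem_range_self a)]
  have h1 : (Equiv.ofInjective ι hι).symm ⟨ι a, Set.mem_range_self a⟩ = a := by
    rw [Equiv.symm_apply_eq]
    rfl
  simp [h1]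

lemma card_perm_fiber {α β : Type*} [Fintype α] [DecidableEq α] [Fintype β] [DecidableEq β]
    (ι κ : α → β) (hι : Function.Injective ι) (hκ : Function.Injective κ) :
    Fintype.card {σ : Equiv.Perm β // ⇑σ ∘ ι = κ} =
      (Fintype.card β - Fintype.card α).factorial := by
  classical
  obtain ⟨σ0, hσ0⟩ := exists_perm_comp ι κ hι hκ
  have e1 : {σ : Equiv.Perm β // ⇑σ ∘ ι = κ} ≃ {σ : Equiv.Perm β // ⇑σ ∘ ι = ι} :=
    { toFun := fun σ => ⟨σ0⁻¹ * σ.1, by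
        funext a
        have := congrFun σ.2 a
        have h0 := congrFun hσ0 a
        simp only [Function.comp_apply] at this h0 ⊢
        simp [Equiv.Perm.mul_apply, this, ← h0]⟩
      invFun := fun g => ⟨σ0 * g.1, by
        funext a
        have := congrFun g.2 a
        have h0 := congrFun hσ0 a
        simp only [Function.comp_apply] at this h0 ⊢
        simp [Equiv.Perm.mul_apply, this, h0]⟩
      left_inv := fun σ => by simp
      right_inv := fun g => by simp }
  have e2 : {σ : Equiv.Perm β // ⇑σ ∘ ι = ι} ≃ Equiv.Perm {x : β // x ∉ Set.range ι} := by
    refine Equiv.trans (Equiv.subtypeEquivRight ?_) (Equiv.Perm.subtypeEquivSubtypePerm _).symm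
    intro σ
    constructor
    · intro hσ a ha
      rw [not_not] at ha
      obtain ⟨x, rfl⟩ := ha
      exact congrFun hσ x
    · intro hσ
      funext x
      exact hσ (ι x) (by rw [not_not]; exact Set.mem_range_self x)
  rw [Fintype.card_congr (e1.trans e2), Fintype.card_perm]
  congr 1
  rw [Fintype.card_subtype_compl]
  congr 1
  have : Fintype.card {x : β // x ∈ Set.range ι} = Fintype.card (Set.range ι) :=
    Fintype.card_congr (Equiv.refl _)
  exact this.trans (Set.card_range_of_injective hι)

lemma sum_perm_comp {α β : Type*} [Fintype α] [DecidableEq α] [Fintype β] [DecidableEq β]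
    (ι : α → β) (hι : Function.Injective ι) (F : (α → β) → ℂ)
    (hF : ∀ κ : α → β, ¬ Function.Injective κ → F κ = 0) :
    ∑ σ : Equiv.Perm β, F (⇑σ ∘ ι) =
      ((Fintype.card β - Fintype.card α).factorial : ℂ) * ∑ κ : α → β, F κ := by
  classical
  have key : ∀ κ : α → β,
      (Finset.univ.filter (fun σ : Equiv.Perm β => ⇑σ ∘ ι = κ)).card • F κ =
        (Fintype.card β - Fintype.card α).factorial • F κ := by
    intro κ
    by_cases hκ : Function.Injective κ
    · congr 1
      rw [← card_perm_fiber ι κ hι hκ, Fintype.card_subtype]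
    · rw [hF κ hκ, smul_zero, smul_zero]
  calc ∑ σ : Equiv.Perm β, F (⇑σ ∘ ι)
      = ∑ σ : Equiv.Perm β, ∑ κ : α → β, if ⇑σ ∘ ι = κ then F κ else 0 := by
        refine Finset.sum_congr rfl fun σ _ => ?_
        rw [Finset.sum_ite_eq Finset.univ (⇑σ ∘ ι) F]
        simp
    _ = ∑ κ : α → β, ∑ σ : Equiv.Perm β, if ⇑σ ∘ ι = κ then F κ else 0 := Finset.sum_comm
    _ = ∑ κ : α → β,
          (Finset.univ.filter (fun σ : Equiv.Perm β => ⇑σ ∘ ι = κ)).card • F κ := by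
        refine Finset.sum_congr rfl fun κ _ => ?_
        rw [← Finset.sum_filter, Finset.sum_const]
    _ = ∑ κ : α → β, (Fintype.card β - Fintype.card α).factorial • F κ :=
        Finset.sum_congr rfl fun κ _ => key κ
    _ = ((Fintype.card β - Fintype.card α).factorial : ℂ) * ∑ κ : α → β, F κ := by
        rw [Finset.mul_sum]
        exact Finset.sum_congr rfl fun κ _ => nsmul_eq_mul _ _

lemma sum_perm_agree {α β γ : Type*} [Fintype α] [DecidableEq α] [Fintype β] [DecidableEq β]
    [Fintype γ] [DecidableEq γ] (E : α ⊕ β ≃ γ) (σ' : Equiv.Perm γ) (f : Equiv.Perm γ → ℂ)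
    (hf : ∀ σ : Equiv.Perm γ, ¬ (∀ t, σ (E (Sum.inr t)) = σ' (E (Sum.inr t))) → f σ = 0) :
    ∑ σ : Equiv.Perm γ, f σ =
      ∑ ρ : Equiv.Perm α, f (σ' * (E.permCongr (Equiv.sumCongr ρ (Equiv.refl β)))) := by
  classical
  have h1 : ∑ σ ∈ Finset.univ.filter
      (fun σ : Equiv.Perm γ => ∀ t, σ (E (Sum.inr t)) = σ' (E (Sum.inr t))), f σ
      = ∑ σ : Equiv.Perm γ, f σ :=
    Finset.sum_filter_of_ne (fun σ _ hσ => by by_contra hc; exact hσ (hf σ hc))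
  rw [← h1]
  refine (Finset.sum_bij
    (fun (ρ : Equiv.Perm α) _ => σ' * (E.permCongr (Equiv.sumCongr ρ (Equiv.refl β))))
    ?_ ?_ ?_ ?_).symm
  · intro ρ _
    simp only [Finset.mem_filter, Finset.mem_univ, true_and]
    intro t
    simp [Equiv.permCongr_apply]
  · intro ρ1 _ ρ2 _ hr
    have hr2 := mul_left_cancel hr
    ext a
    have := congrArg (fun (g : Equiv.Perm γ) => g (E (Sum.inl a))) hr2
    simp only [Equiv.permCongr_apply, Equiv.symm_apply_apply, Equiv.sumCongr_apply] at this
    exact Sum.inl_injective (E.injective this)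
  · intro σ hσ
    simp only [Finset.mem_filter, Finset.mem_univ, true_and] at hσ
    set g : Equiv.Perm γ := σ'⁻¹ * σ with hg
    have hgfix : ∀ t : β, g (E (Sum.inr t)) = E (Sum.inr t) := by
      intro t
      simp [hg, Equiv.Perm.mul_apply, hσ t]
    set g' : Equiv.Perm (α ⊕ β) := E.symm.permCongr g with hg'
    have hg'fix : ∀ t : β, g' (Sum.inr t) = Sum.inr t := by
      intro t
      simp [hg', Equiv.permCongr_apply, hgfix t]
    have hmaps : Set.MapsTo ⇑g' (Set.range Sum.inl) (Set.range Sum.inl) := by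
      rintro x ⟨a, rfl⟩
      rcases h : g' (Sum.inl a) with l | r
      · exact ⟨l, rfl⟩
      · exfalso
        have h2 : g' (Sum.inr r) = Sum.inr r := hg'fix r
        have := g'.injective (h.trans h2.symm)
        exact Sum.inl_ne_inr this
    obtain ⟨⟨ρ1, ρ2⟩, hρ⟩ := Equiv.Perm.mem_sumCongrHom_range_of_perm_mapsTo_inl hmaps
    have hρ2 : ρ2 = Equiv.refl β := by
      ext t
      have := hg'fix t
      rw [← hρ] at this
      simpa [Equiv.Perm.sumCongrHom] using this
    refine ⟨ρ1, Finset.mem_univ _, ?_⟩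
    have hgeq : g' = Equiv.sumCongr ρ1 (Equiv.refl β) := by
      rw [← hρ, hρ2]
      rfl
    have hEg : E.permCongr g' = g := by
      ext x
      simp [hg', Equiv.permCongr_apply]
    show σ' * E.permCongr (Equiv.sumCongr ρ1 (Equiv.refl β)) = σ
    rw [← hgeq, hEg, hg]
    group
  · intro ρ _
    rfl

lemma hasSum_helper {H : Type*} [NormedAddCommGroup H] [InnerProductSpace ℂ H] [CompleteSpace H]
    {J : Type} (b : HilbertBasis J ℂ H) {K : Type*} [Fintype K] {m : ℕ}
    (A B : K → ℂ) (u v : K → Fin m → H) :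
    HasSum (fun z : Fin m → J =>
        (∑ σ : K, A σ * ∏ t, ⟪(b (z t) : H), u σ t⟫) *
        (∑ σ : K, B σ * ∏ t, ⟪v σ t, (b (z t) : H)⟫))
      (∑ σ : K, ∑ σ' : K, A σ * B σ' * ∏ t, ⟪v σ' t, u σ t⟫) := by
  have key : ∀ σ σ' : K, HasSum
      (fun z : Fin m → J =>
        (A σ * B σ') * ∏ t, (⟪v σ' t, (b (z t) : H)⟫ * ⟪(b (z t) : H), u σ t⟫))
      ((A σ * B σ') * ∏ t, ⟪v σ' t, u σ t⟫) := fun σ σ' =>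
    (hasSum_prod_pi _ _ (fun t => b.hasSum_inner_mul_inner (v σ' t) (u σ t))).mul_left _
  have h2 : HasSum (fun z : Fin m → J => ∑ σ : K, ∑ σ' : K,
      (A σ * B σ') * ∏ t, (⟪v σ' t, (b (z t) : H)⟫ * ⟪(b (z t) : H), u σ t⟫))
      (∑ σ : K, ∑ σ' : K, (A σ * B σ') * ∏ t, ⟪v σ' t, u σ t⟫) :=
    hasSum_sum fun σ _ => hasSum_sum fun σ' _ => key σ σ'
  convert h2 using 1
  funext z
  rw [Finset.sum_mul_sum]
  refine Finset.sum_congr rfl fun σ _ => Finset.sum_congr rfl fun σ' _ => ?_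
  rw [Finset.prod_mul_distrib]
  ring

end AuxLemmas

theorem slater_determinant_partial_trace_formula
    {H Hn HN : Type*}
    [NormedAddCommGroup H] [InnerProductSpace ℂ H] [CompleteSpace H]
    [NormedAddCommGroup Hn] [InnerProductSpace ℂ Hn] [CompleteSpace Hn]
    [NormedAddCommGroup HN] [InnerProductSpace ℂ HN] [CompleteSpace HN]
    (n N : ℕ) (hn : 1 ≤ n) (hnN : n ≤ N)
    {J : Type} (b : HilbertBasis J ℂ H)
    (tpN : (Fin N → H) → HN)
    (htpN_inner : ∀ x y : Fin N → H, ⟪tpN x, tpN y⟫ = ∏ i, ⟪x i, y i⟫)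
    (htpN_dense : Dense (Submodule.span ℂ (Set.range tpN) : Set HN))
    (tpn : (Fin n → H) → Hn)
    (htpn_inner : ∀ x y : Fin n → H, ⟪tpn x, tpn y⟫ = ∏ i, ⟪x i, y i⟫)
    (htpn_dense : Dense (Submodule.span ℂ (Set.range tpn) : Set Hn))
    (Un : Equiv.Perm (Fin n) → (Hn →L[ℂ] Hn))
    (hUn : ∀ (π : Equiv.Perm (Fin n)) (x : Fin n → H),
      Un π (tpn x) = tpn (fun i => x (π⁻¹ i)))
    (S : Hn →L[ℂ] Hn)
    (hS : S = ∑ π : Equiv.Perm (Fin n), ((Equiv.Perm.sign π : ℤ) : ℂ) • Un π)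
    -- the Slater determinant and the projector onto its span
    (e : Fin N → H) (he : Orthonormal ℂ e)
    (Ψ : HN)
    (hΨ : Ψ = ((Real.sqrt N.factorial : ℝ) : ℂ)⁻¹ •
      ∑ π : Equiv.Perm (Fin N),
        ((Equiv.Perm.sign π : ℤ) : ℂ) • tpN (fun i => e (π⁻¹ i)))
    (PΨ : HN →L[ℂ] HN) (hPΨ : ∀ φ : HN, PΨ φ = ⟪Ψ, φ⟫ • Ψ)
    -- the partial trace down to H^{⊗n}
    (mixn : Hn → (Fin (N - n) → J) → HN)
    (hmixn_tp : ∀ (y : Fin n → H) (z : Fin (N - n) → J),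
      mixn (tpn y) z =
        tpN (fun i => Fin.append y (fun t => b (z t)) (Fin.cast (by omega) i)))
    (hmixn_inner : ∀ (w x : Hn) (z z' : Fin (N - n) → J),
      ⟪mixn w z, mixn x z'⟫ = ⟪w, x⟫ * ∏ t, ⟪(b (z t) : H), b (z' t)⟫)
    (ptrn : (HN →L[ℂ] HN) → (Hn →L[ℂ] Hn))
    (hptrn : ∀ w x : Hn,
      HasSum (fun z : Fin (N - n) → J => ⟪PΨ (mixn w z), mixn x z⟫)
        ⟪ptrn PΨ w, x⟫)
    -- the partial trace down to H (the one-body marginal)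
    (mix1 : H → (Fin (N - 1) → J) → HN)
    (hmix1_tp : ∀ (h : H) (z : Fin (N - 1) → J),
      mix1 h z =
        tpN (fun i => Fin.cons (α := fun _ => H) h (fun t => b (z t)) (Fin.cast (by omega) i)))
    (hmix1_inner : ∀ (w x : H) (z z' : Fin (N - 1) → J),
      ⟪mix1 w z, mix1 x z'⟫ = ⟪w, x⟫ * ∏ t, ⟪(b (z t) : H), b (z' t)⟫)
    (ptr1 : (HN →L[ℂ] HN) → (H →L[ℂ] H))
    (hptr1 : ∀ w x : H,
      HasSum (fun z : Fin (N - 1) → J => ⟪PΨ (mix1 w z), mix1 x z⟫)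
        ⟪ptr1 PΨ w, x⟫)
    -- the n-th tensor power of the one-body marginal
    (Dn : Hn →L[ℂ] Hn)
    (hDn : ∀ x : Fin n → H, Dn (tpn x) = tpn (fun i => ptr1 PΨ (x i))) :
    ptrn PΨ = (((N : ℂ) ^ n * ((N - n).factorial : ℂ)) / (N.factorial : ℂ)) •
      (Dn ∘L S) := by
  classical
  have hNpos : 0 < N := lt_of_lt_of_le hn hnN
  have hNn : n + (N - n) = N := Nat.add_sub_cancel' hnN
  have hN1 : 1 + (N - 1) = N := by omega
  set E : Fin n ⊕ Fin (N - n) ≃ Fin N := finSumFinEquiv.trans (finCongr hNn) with hE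
  set E1 : Fin 1 ⊕ Fin (N - 1) ≃ Fin N := finSumFinEquiv.trans (finCongr hN1) with hE1
  set sgc : Equiv.Perm (Fin N) → ℂ := fun σ => ((Equiv.Perm.sign σ : ℤ) : ℂ) with hsgc
  set sg : Equiv.Perm (Fin n) → ℂ := fun ρ => ((Equiv.Perm.sign ρ : ℤ) : ℂ) with hsg
  set rtN : ℂ := ((Real.sqrt N.factorial : ℝ) : ℂ) with hrtN
  have hrt2 : rtN⁻¹ * rtN⁻¹ = (N.factorial : ℂ)⁻¹ := by
    rw [← mul_inv, hrtN, ← Complex.ofReal_mul,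
      Real.mul_self_sqrt (Nat.cast_nonneg _)]
    norm_num
  have horth : ∀ a a' : Fin N, ⟪e a, e a'⟫ = if a = a' then 1 else 0 :=
    orthonormal_iff_ite.mp he
  have hsg2 : ∀ σ : Equiv.Perm (Fin N), sgc σ * sgc σ = 1 := by
    intro σ
    rw [hsgc]
    rw [← Int.cast_mul, ← Units.val_mul, Int.units_mul_self]
    norm_num
  -- inner products with the Slater determinant
  have hΨf : ∀ f : Fin N → H, ⟪Ψ, tpN f⟫ =
      rtN⁻¹ * ∑ σ : Equiv.Perm (Fin N), sgc σ * ∏ i, ⟪e (σ i), f i⟫ := by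
    intro f
    rw [hΨ, inner_smul_left, sum_inner, map_inv₀, Complex.conj_ofReal]
    congr 1
    refine Fintype.sum_equiv (Equiv.inv (Equiv.Perm (Fin N))) _ _ (fun π => ?_)
    rw [inner_smul_left, htpN_inner]
    simp [hsgc, Equiv.Perm.sign_inv, map_intCast]
  -- cast computations
  have hcastl : ∀ (h : N = n + (N - n)) (i : Fin n),
      Fin.cast h (E (Sum.inl i)) = Fin.castAdd (N - n) i := by
    intro h i
    ext
    simp [hE]
  have hcastr : ∀ (h : N = n + (N - n)) (t : Fin (N - n)),
      Fin.cast h (E (Sum.inr t)) = Fin.natAdd n t := by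
    intro h t
    ext
    simp [hE]
  have hcastl1 : ∀ (h : N = N - 1 + 1) (i : Fin 1),
      Fin.cast h (E1 (Sum.inl i)) = (0 : Fin (N - 1 + 1)) := by
    intro h i
    ext
    have h0 : (i : ℕ) = 0 := Nat.lt_one_iff.mp i.isLt
    simp [hE1, h0]
  have hcastr1 : ∀ (h : N = N - 1 + 1) (t : Fin (N - 1)),
      Fin.cast h (E1 (Sum.inr t)) = Fin.succ t := by
    intro h t
    ext
    simp [hE1]
  -- inner products of Ψ with mixed vectors
  have hmixΨ : ∀ (x : Fin n → H) (z : Fin (N - n) → J),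
      ⟪Ψ, mixn (tpn x) z⟫ = rtN⁻¹ * ∑ σ : Equiv.Perm (Fin N),
        (sgc σ * ∏ i, ⟪e (σ (E (Sum.inl i))), x i⟫) *
          ∏ t, ⟪e (σ (E (Sum.inr t))), (b (z t) : H)⟫ := by
    intro x z
    rw [hmixn_tp, hΨf]
    congr 1
    refine Finset.sum_congr rfl fun σ _ => ?_
    rw [mul_assoc]
    congr 1
    rw [← Equiv.prod_comp E (fun j : Fin N =>
      ⟪e (σ j), Fin.append x (fun t => b (z t)) (Fin.cast (by omega) j)⟫)]
    rw [Fintype.prod_sum_type]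
    congr 1
    · refine Finset.prod_congr rfl fun i _ => ?_
      rw [hcastl, Fin.append_left]
    · refine Finset.prod_congr rfl fun t _ => ?_
      rw [hcastr, Fin.append_right]
  have hmixΨ' : ∀ (y : Fin n → H) (z : Fin (N - n) → J),
      ⟪mixn (tpn y) z, Ψ⟫ = rtN⁻¹ * ∑ σ : Equiv.Perm (Fin N),
        (sgc σ * ∏ i, ⟪y i, e (σ (E (Sum.inl i)))⟫) *
          ∏ t, ⟪(b (z t) : H), e (σ (E (Sum.inr t)))⟫ := by
    intro y z
    rw [← inner_conj_symm, hmixΨ, hrtN, map_mul, map_inv₀, Complex.conj_ofReal, map_sum]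
    congr 1
    refine Finset.sum_congr rfl fun σ _ => ?_
    rw [map_mul, map_mul, map_prod, map_prod]
    simp [hsgc, map_intCast, inner_conj_symm]
  have hmix1Ψ : ∀ (x : H) (z : Fin (N - 1) → J),
      ⟪Ψ, mix1 x z⟫ = rtN⁻¹ * ∑ σ : Equiv.Perm (Fin N),
        (sgc σ * ⟪e (σ (E1 (Sum.inl 0))), x⟫) *
          ∏ t, ⟪e (σ (E1 (Sum.inr t))), (b (z t) : H)⟫ := by
    intro x z
    rw [hmix1_tp, hΨf]
    congr 1
    refine Finset.sum_congr rfl fun σ _ => ?_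
    rw [mul_assoc]
    congr 1
    rw [← Equiv.prod_comp E1 (fun j : Fin N =>
      ⟪e (σ j), Fin.cons (α := fun _ => H) x (fun t => b (z t)) (Fin.cast (by omega) j)⟫)]
    rw [Fintype.prod_sum_type]
    congr 1
    · rw [Fin.prod_univ_one, hcastl1, Fin.cons_zero]
    · refine Finset.prod_congr rfl fun t _ => ?_
      rw [hcastr1, Fin.cons_succ]
  have hmix1Ψ' : ∀ (y : H) (z : Fin (N - 1) → J),
      ⟪mix1 y z, Ψ⟫ = rtN⁻¹ * ∑ σ : Equiv.Perm (Fin N),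
        (sgc σ * ⟪y, e (σ (E1 (Sum.inl 0)))⟫) *
          ∏ t, ⟪(b (z t) : H), e (σ (E1 (Sum.inr t)))⟫ := by
    intro y z
    rw [← inner_conj_symm, hmix1Ψ, hrtN, map_mul, map_inv₀, Complex.conj_ofReal, map_sum]
    congr 1
    refine Finset.sum_congr rfl fun σ _ => ?_
    rw [map_mul, map_mul, map_prod]
    simp [hsgc, map_intCast, inner_conj_symm]
  -- matrix elements of the n-body reduced operator
  have hLmat : ∀ y x : Fin n → H, ⟪ptrn PΨ (tpn y), tpn x⟫ =
      (N.factorial : ℂ)⁻¹ * ∑ σ : Equiv.Perm (Fin N), ∑ σ' : Equiv.Perm (Fin N),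
        (sgc σ * ∏ i, ⟪y i, e (σ (E (Sum.inl i)))⟫) *
        (sgc σ' * ∏ i, ⟪e (σ' (E (Sum.inl i))), x i⟫) *
        ∏ t, ⟪e (σ' (E (Sum.inr t))), e (σ (E (Sum.inr t)))⟫ := by
    intro y x
    have hfun : (fun z : Fin (N - n) → J => ⟪PΨ (mixn (tpn y) z), mixn (tpn x) z⟫) =
        fun z : Fin (N - n) → J => (rtN⁻¹ * rtN⁻¹) *
          ((∑ σ : Equiv.Perm (Fin N), (sgc σ * ∏ i, ⟪y i, e (σ (E (Sum.inl i)))⟫) *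
              ∏ t, ⟪(b (z t) : H), e (σ (E (Sum.inr t)))⟫) *
           (∑ σ : Equiv.Perm (Fin N), (sgc σ * ∏ i, ⟪e (σ (E (Sum.inl i))), x i⟫) *
              ∏ t, ⟪e (σ (E (Sum.inr t))), (b (z t) : H)⟫)) := by
      funext z
      rw [hPΨ, inner_smul_left, inner_conj_symm, hmixΨ', hmixΨ]
      ring
    have hhs := (hasSum_helper b
      (fun σ : Equiv.Perm (Fin N) => sgc σ * ∏ i, ⟪y i, e (σ (E (Sum.inl i)))⟫)
      (fun σ : Equiv.Perm (Fin N) => sgc σ * ∏ i, ⟪e (σ (E (Sum.inl i))), x i⟫)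
      (fun σ t => e (σ (E (Sum.inr t)))) (fun σ t => e (σ (E (Sum.inr t))))).mul_left
      (rtN⁻¹ * rtN⁻¹)
    have h5 := hptrn (tpn y) (tpn x)
    rw [hfun] at h5
    rw [h5.unique hhs, hrt2]
  -- matrix elements of the one-body reduced operator
  have hD1 : ∀ w x : H, ⟪ptr1 PΨ w, x⟫ =
      (((N - 1).factorial : ℂ) / (N.factorial : ℂ)) * ∑ k : Fin N, ⟪w, e k⟫ * ⟪e k, x⟫ := by
    intro w x
    have hfun : (fun z : Fin (N - 1) → J => ⟪PΨ (mix1 w z), mix1 x z⟫) =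
        fun z : Fin (N - 1) → J => (rtN⁻¹ * rtN⁻¹) *
          ((∑ σ : Equiv.Perm (Fin N), (sgc σ * ⟪w, e (σ (E1 (Sum.inl 0)))⟫) *
              ∏ t, ⟪(b (z t) : H), e (σ (E1 (Sum.inr t)))⟫) *
           (∑ σ : Equiv.Perm (Fin N), (sgc σ * ⟪e (σ (E1 (Sum.inl 0))), x⟫) *
              ∏ t, ⟪e (σ (E1 (Sum.inr t))), (b (z t) : H)⟫)) := by
      funext z
      rw [hPΨ, inner_smul_left, inner_conj_symm, hmix1Ψ', hmix1Ψ]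
      ring
    have hhs := (hasSum_helper b
      (fun σ : Equiv.Perm (Fin N) => sgc σ * ⟪w, e (σ (E1 (Sum.inl 0)))⟫)
      (fun σ : Equiv.Perm (Fin N) => sgc σ * ⟪e (σ (E1 (Sum.inl 0))), x⟫)
      (fun σ t => e (σ (E1 (Sum.inr t)))) (fun σ t => e (σ (E1 (Sum.inr t))))).mul_left
      (rtN⁻¹ * rtN⁻¹)
    have h5 := hptr1 w x
    rw [hfun] at h5
    rw [h5.unique hhs, hrt2]
    have hperm1 : ∀ ρ : Equiv.Perm (Fin 1),
        E1.permCongr (Equiv.sumCongr ρ (Equiv.refl (Fin (N - 1)))) = 1 := by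
      intro ρ
      ext x'
      rcases h : E1.symm x' with a | t
      · have hra : ρ a = a := Subsingleton.elim _ _
        simp only [Equiv.permCongr_apply, h, Equiv.sumCongr_apply, Sum.map_inl, hra,
          Equiv.Perm.coe_one, id_eq]
        rw [← h, Equiv.apply_symm_apply]
      · simp only [Equiv.permCongr_apply, h, Equiv.sumCongr_apply, Sum.map_inr,
          Equiv.refl_apply, Equiv.Perm.coe_one, id_eq]
        rw [← h, Equiv.apply_symm_apply]
    have hinner : ∀ σ : Equiv.Perm (Fin N),
        (∑ σ' : Equiv.Perm (Fin N),
          (sgc σ * ⟪w, e (σ (E1 (Sum.inl 0)))⟫) * (sgc σ' * ⟪e (σ' (E1 (Sum.inl 0))), x⟫) *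
          ∏ t, ⟪e (σ' (E1 (Sum.inr t))), e (σ (E1 (Sum.inr t)))⟫)
        = ⟪w, e (σ (E1 (Sum.inl 0)))⟫ * ⟪e (σ (E1 (Sum.inl 0))), x⟫ := by
      intro σ
      rw [sum_perm_agree E1 σ _ (fun g hg => by
        push_neg at hg
        obtain ⟨t, ht⟩ := hg
        rw [Finset.prod_eq_zero (Finset.mem_univ t) (by rw [horth, if_neg ht]), mul_zero])]
      have hterm : ∀ ρ : Equiv.Perm (Fin 1),
          (sgc σ * ⟪w, e (σ (E1 (Sum.inl 0)))⟫) *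
            (sgc (σ * E1.permCongr (Equiv.sumCongr ρ (Equiv.refl (Fin (N - 1))))) *
              ⟪e ((σ * E1.permCongr (Equiv.sumCongr ρ (Equiv.refl (Fin (N - 1)))))
                (E1 (Sum.inl 0))), x⟫) *
            ∏ t, ⟪e ((σ * E1.permCongr (Equiv.sumCongr ρ (Equiv.refl (Fin (N - 1)))))
                (E1 (Sum.inr t))), e (σ (E1 (Sum.inr t)))⟫
          = ⟪w, e (σ (E1 (Sum.inl 0)))⟫ * ⟪e (σ (E1 (Sum.inl 0))), x⟫ := by
        intro ρ
        rw [hperm1 ρ, mul_one]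
        rw [Finset.prod_congr rfl (fun t _ => by rw [horth, if_pos rfl]),
          Finset.prod_const_one, mul_one]
        calc (sgc σ * ⟪w, e (σ (E1 (Sum.inl 0)))⟫) * (sgc σ * ⟪e (σ (E1 (Sum.inl 0))), x⟫)
            = (sgc σ * sgc σ) * (⟪w, e (σ (E1 (Sum.inl 0)))⟫ * ⟪e (σ (E1 (Sum.inl 0))), x⟫) := by
              ring
          _ = _ := by rw [hsg2, one_mul]
      rw [Finset.sum_congr rfl (fun ρ _ => hterm ρ), Finset.sum_const, Finset.card_univ,
        Fintype.card_perm, Fintype.card_fin]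
      simp
    rw [Finset.sum_congr rfl (fun σ _ => hinner σ)]
    have hι1 : Function.Injective (fun i : Fin 1 => E1 (Sum.inl i)) :=
      fun a b' _ => Subsingleton.elim a b'
    have hcomp := sum_perm_comp (fun i : Fin 1 => E1 (Sum.inl i)) hι1
      (fun κ => ⟪w, e (κ 0)⟫ * ⟪e (κ 0), x⟫)
      (fun κ hκ => absurd (fun a b' _ => Subsingleton.elim a b') hκ)
    have hcomp' : (∑ σ : Equiv.Perm (Fin N),
          ⟪w, e (σ (E1 (Sum.inl 0)))⟫ * ⟪e (σ (E1 (Sum.inl 0))), x⟫)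
        = ((N - 1).factorial : ℂ) * ∑ κ : Fin 1 → Fin N, ⟪w, e (κ 0)⟫ * ⟪e (κ 0), x⟫ := by
      simpa using hcomp
    have hkk : (∑ κ : Fin 1 → Fin N, ⟪w, e (κ 0)⟫ * ⟪e (κ 0), x⟫)
        = ∑ k : Fin N, ⟪w, e k⟫ * ⟪e k, x⟫ := by
      refine Fintype.sum_equiv (Equiv.funUnique (Fin 1) (Fin N)) _ _ (fun κ => ?_)
      rfl
    rw [hcomp', hkk]
    ring
  -- reduce the σ' sum to a sum over Perm (Fin n)
  have hLmat2 : ∀ y x : Fin n → H, ⟪ptrn PΨ (tpn y), tpn x⟫ =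
      (N.factorial : ℂ)⁻¹ * ∑ σ : Equiv.Perm (Fin N), ∑ ρ : Equiv.Perm (Fin n),
        sg ρ * ((∏ i, ⟪y i, e (σ (E (Sum.inl i)))⟫) *
          ∏ i, ⟪e (σ (E (Sum.inl (ρ i)))), x i⟫) := by
    intro y x
    rw [hLmat y x]
    congr 1
    refine Finset.sum_congr rfl fun σ _ => ?_
    rw [sum_perm_agree E σ _ (fun g hg => by
      push_neg at hg
      obtain ⟨t, ht⟩ := hg
      rw [Finset.prod_eq_zero (Finset.mem_univ t) (by rw [horth, if_neg ht]), mul_zero])]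
    refine Finset.sum_congr rfl fun ρ _ => ?_
    have h1 : ∀ i, (σ * E.permCongr (Equiv.sumCongr ρ (Equiv.refl (Fin (N - n))))) (E (Sum.inl i))
        = σ (E (Sum.inl (ρ i))) := fun i => by
      rw [Equiv.Perm.mul_apply]
      congr 1
      simp [Equiv.permCongr_apply]
    have h2 : ∀ t, (σ * E.permCongr (Equiv.sumCongr ρ (Equiv.refl (Fin (N - n))))) (E (Sum.inr t))
        = σ (E (Sum.inr t)) := fun t => by
      rw [Equiv.Perm.mul_apply]
      congr 1
      simp [Equiv.permCongr_apply]
    have h3 : sgc (σ * E.permCongr (Equiv.sumCongr ρ (Equiv.refl (Fin (N - n))))) = sgc σ * sg ρ := by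
      have hsgn : Equiv.Perm.sign (σ * E.permCongr (Equiv.sumCongr ρ (Equiv.refl (Fin (N - n)))))
          = Equiv.Perm.sign σ * Equiv.Perm.sign ρ := by
        rw [Equiv.Perm.sign_mul, Equiv.Perm.sign_permCongr, Equiv.Perm.sign_sumCongr]
        simp
      simp [hsgc, hsg, hsgn]
    have e1 : (∏ i, ⟪e ((σ * E.permCongr (Equiv.sumCongr ρ (Equiv.refl (Fin (N - n)))))
          (E (Sum.inl i))), x i⟫) = ∏ i, ⟪e (σ (E (Sum.inl (ρ i)))), x i⟫ :=
      Finset.prod_congr rfl (fun i _ => by rw [h1 i])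
    have e2 : (∏ t, ⟪e ((σ * E.permCongr (Equiv.sumCongr ρ (Equiv.refl (Fin (N - n)))))
          (E (Sum.inr t))), e (σ (E (Sum.inr t)))⟫) = 1 := by
      rw [Finset.prod_congr rfl (fun t _ => by rw [h2 t, horth, if_pos rfl])]
      exact Finset.prod_const_one
    rw [e1, e2, h3, mul_one]
    generalize (∏ i, ⟪y i, e (σ (E (Sum.inl i)))⟫) = P
    generalize (∏ i, ⟪e (σ (E (Sum.inl (ρ i)))), x i⟫) = Q
    linear_combination P * Q * sg ρ * hsg2 σ
  -- antisymmetry kills non-injective κ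
  have hG0 : ∀ (y x : Fin n → H) (κ : Fin n → Fin N), ¬ Function.Injective κ →
      (∑ ρ : Equiv.Perm (Fin n),
        sg ρ * ((∏ i, ⟪y i, e (κ i)⟫) * ∏ i, ⟪e (κ (ρ i)), x i⟫)) = 0 := by
    intro y x κ hκ
    rw [Function.not_injective_iff] at hκ
    obtain ⟨i0, j0, hij, hne⟩ := hκ
    have hswap : ∀ i, κ (Equiv.swap i0 j0 i) = κ i := by
      intro i
      rcases eq_or_ne i i0 with rfl | h1
      · rw [Equiv.swap_apply_left, ← hij]
      rcases eq_or_ne i j0 with rfl | h2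
      · rw [Equiv.swap_apply_right, hij]
      · rw [Equiv.swap_apply_of_ne_of_ne h1 h2]
    have hre : (∑ ρ : Equiv.Perm (Fin n),
          sg (Equiv.swap i0 j0 * ρ) *
            ((∏ i, ⟪y i, e (κ i)⟫) * ∏ i, ⟪e (κ ((Equiv.swap i0 j0 * ρ) i)), x i⟫))
        = ∑ ρ : Equiv.Perm (Fin n),
            sg ρ * ((∏ i, ⟪y i, e (κ i)⟫) * ∏ i, ⟪e (κ (ρ i)), x i⟫) :=
      Fintype.sum_equiv (Equiv.mulLeft (Equiv.swap i0 j0)) _ _ (fun ρ => by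
        simp only [Equiv.coe_mulLeft])
    have hneg : ∀ ρ : Equiv.Perm (Fin n),
        sg (Equiv.swap i0 j0 * ρ) *
          ((∏ i, ⟪y i, e (κ i)⟫) * ∏ i, ⟪e (κ ((Equiv.swap i0 j0 * ρ) i)), x i⟫)
        = - (sg ρ * ((∏ i, ⟪y i, e (κ i)⟫) * ∏ i, ⟪e (κ (ρ i)), x i⟫)) := by
      intro ρ
      have hs1 : sg (Equiv.swap i0 j0 * ρ) = - sg ρ := by
        have hsgn : Equiv.Perm.sign (Equiv.swap i0 j0 * ρ) = - Equiv.Perm.sign ρ := by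
          rw [Equiv.Perm.sign_mul, Equiv.Perm.sign_swap hne, neg_one_mul]
        simp [hsg, hsgn]
      have hs2 : ∀ i, κ ((Equiv.swap i0 j0 * ρ) i) = κ (ρ i) := fun i => by
        rw [Equiv.Perm.mul_apply, hswap]
      have e3 : (∏ i, ⟪e (κ ((Equiv.swap i0 j0 * ρ) i)), x i⟫)
          = ∏ i, ⟪e (κ (ρ i)), x i⟫ := Finset.prod_congr rfl (fun i _ => by rw [hs2])
      rw [hs1, e3]
      ring
    have h0 : (∑ ρ : Equiv.Perm (Fin n),
          sg ρ * ((∏ i, ⟪y i, e (κ i)⟫) * ∏ i, ⟪e (κ (ρ i)), x i⟫))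
        = - ∑ ρ : Equiv.Perm (Fin n),
            sg ρ * ((∏ i, ⟪y i, e (κ i)⟫) * ∏ i, ⟪e (κ (ρ i)), x i⟫) := by
      conv_lhs => rw [← hre]
      rw [Finset.sum_congr rfl (fun ρ _ => hneg ρ)]
      rw [← Finset.sum_neg_distrib]
    have h2 : (2 : ℂ) * (∑ ρ : Equiv.Perm (Fin n),
        sg ρ * ((∏ i, ⟪y i, e (κ i)⟫) * ∏ i, ⟪e (κ (ρ i)), x i⟫)) = 0 := by
      rw [two_mul]
      nth_rewrite 2 [h0]
      ring
    exact (mul_eq_zero.mp h2).resolve_left two_ne_zero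
  -- sum over the big permutation group collapses to a sum over all maps
  have hιE : Function.Injective (fun i : Fin n => E (Sum.inl i)) :=
    fun a b' hab => Sum.inl_injective (E.injective hab)
  have hLfinal : ∀ y x : Fin n → H, ⟪ptrn PΨ (tpn y), tpn x⟫ =
      (N.factorial : ℂ)⁻¹ * (((N - n).factorial : ℂ) *
        ∑ κ : Fin n → Fin N, ∑ ρ : Equiv.Perm (Fin n),
          sg ρ * ((∏ i, ⟪y i, e (κ i)⟫) * ∏ i, ⟪e (κ (ρ i)), x i⟫)) := by
    intro y x
    rw [hLmat2 y x]
    congr 1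
    have hcomp := sum_perm_comp (fun i : Fin n => E (Sum.inl i)) hιE
      (fun κ => ∑ ρ : Equiv.Perm (Fin n),
        sg ρ * ((∏ i, ⟪y i, e (κ i)⟫) * ∏ i, ⟪e (κ (ρ i)), x i⟫))
      (hG0 y x)
    have hcomp' : (∑ σ : Equiv.Perm (Fin N), ∑ ρ : Equiv.Perm (Fin n),
          sg ρ * ((∏ i, ⟪y i, e (σ (E (Sum.inl i)))⟫) *
            ∏ i, ⟪e (σ (E (Sum.inl (ρ i)))), x i⟫))
        = ((N - n).factorial : ℂ) * ∑ κ : Fin n → Fin N, ∑ ρ : Equiv.Perm (Fin n),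
            sg ρ * ((∏ i, ⟪y i, e (κ i)⟫) * ∏ i, ⟪e (κ (ρ i)), x i⟫) := by
      simpa using hcomp
    rw [hcomp']
  -- the right-hand side matrix elements
  have hstep : ∀ (y x : Fin n → H) (ρ : Equiv.Perm (Fin n)),
      (∑ κ : Fin n → Fin N, ∏ i, (⟪y (ρ⁻¹ i), e (κ i)⟫ * ⟪e (κ i), x i⟫))
      = ∑ κ : Fin n → Fin N,
          (∏ i, ⟪y i, e (κ i)⟫) * ∏ i, ⟪e (κ (ρ⁻¹ i)), x i⟫ := by
    intro y x ρ
    refine Fintype.sum_equiv (Equiv.arrowCongr ρ⁻¹ (Equiv.refl (Fin N))) _ _ (fun κ => ?_)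
    simp only [Equiv.arrowCongr_apply, Equiv.refl_symm, Equiv.refl_apply, Function.comp,
      Equiv.Perm.inv_def, Equiv.symm_symm]
    rw [Finset.prod_mul_distrib]
    congr 1
    · refine ((Equiv.prod_comp ρ (fun i => ⟪y (ρ.symm i), e (κ i)⟫)).symm).trans ?_
      refine Finset.prod_congr rfl fun i _ => ?_
      rw [Equiv.symm_apply_apply]
    · refine Finset.prod_congr rfl fun i _ => ?_
      rw [Equiv.apply_symm_apply]
  have hRmat : ∀ y x : Fin n → H,
      ⟪((((N : ℂ) ^ n * ((N - n).factorial : ℂ)) / (N.factorial : ℂ)) • (Dn ∘L S)) (tpn y), tpn x⟫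
      = (((N : ℂ) ^ n * ((N - n).factorial : ℂ)) / (N.factorial : ℂ)) *
          ((((N - 1).factorial : ℂ) / (N.factorial : ℂ)) ^ n *
            ∑ κ : Fin n → Fin N, ∑ ρ : Equiv.Perm (Fin n),
              sg ρ * ((∏ i, ⟪y i, e (κ i)⟫) * ∏ i, ⟪e (κ (ρ i)), x i⟫)) := by
    intro y x
    rw [ContinuousLinearMap.smul_apply, inner_smul_left]
    have hconj : (starRingEnd ℂ) (((N : ℂ) ^ n * ((N - n).factorial : ℂ)) / (N.factorial : ℂ))
        = ((N : ℂ) ^ n * ((N - n).factorial : ℂ)) / (N.factorial : ℂ) := by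
      simp [map_div₀]
    rw [hconj]
    congr 1
    have hDnS : (Dn ∘L S) (tpn y) = ∑ ρ : Equiv.Perm (Fin n),
        sg ρ • tpn (fun i => ptr1 PΨ (y (ρ⁻¹ i))) := by
      rw [ContinuousLinearMap.comp_apply, hS, ContinuousLinearMap.sum_apply, map_sum]
      refine Finset.sum_congr rfl fun ρ _ => ?_
      rw [ContinuousLinearMap.smul_apply, map_smul, hUn, hDn]
    calc ⟪(Dn ∘L S) (tpn y), tpn x⟫
        = ∑ ρ : Equiv.Perm (Fin n), sg ρ * ∏ i, ⟪ptr1 PΨ (y (ρ⁻¹ i)), x i⟫ := by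
          rw [hDnS, sum_inner]
          refine Finset.sum_congr rfl fun ρ _ => ?_
          rw [inner_smul_left, htpn_inner]
          congr 1
          simp [hsg, map_intCast]
      _ = ∑ ρ : Equiv.Perm (Fin n),
            sg ρ * ((((N - 1).factorial : ℂ) / (N.factorial : ℂ)) ^ n *
              ∑ κ : Fin n → Fin N, ∏ i, (⟪y (ρ⁻¹ i), e (κ i)⟫ * ⟪e (κ i), x i⟫)) := by
          refine Finset.sum_congr rfl fun ρ _ => ?_
          congr 1
          rw [Finset.prod_congr rfl (fun i _ => hD1 (y (ρ⁻¹ i)) (x i)),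
            Finset.prod_mul_distrib, Finset.prod_const, Finset.card_univ, Fintype.card_fin,
            Finset.prod_univ_sum, Fintype.piFinset_univ]
      _ = (((N - 1).factorial : ℂ) / (N.factorial : ℂ)) ^ n *
            ∑ ρ : Equiv.Perm (Fin n), sg ρ *
              ∑ κ : Fin n → Fin N,
                (∏ i, ⟪y i, e (κ i)⟫) * ∏ i, ⟪e (κ (ρ⁻¹ i)), x i⟫ := by
          rw [Finset.mul_sum]
          refine Finset.sum_congr rfl fun ρ _ => ?_
          rw [hstep y x ρ]
          ring
      _ = (((N - 1).factorial : ℂ) / (N.factorial : ℂ)) ^ n *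
            ∑ ρ : Equiv.Perm (Fin n), sg ρ *
              ∑ κ : Fin n → Fin N,
                (∏ i, ⟪y i, e (κ i)⟫) * ∏ i, ⟪e (κ (ρ i)), x i⟫ := by
          congr 1
          refine Fintype.sum_equiv (Equiv.inv (Equiv.Perm (Fin n))) _ _ (fun ρ => ?_)
          simp only [Equiv.inv_apply]
          have h1 : sg ρ⁻¹ = sg ρ := by simp [hsg]
          rw [h1]
      _ = (((N - 1).factorial : ℂ) / (N.factorial : ℂ)) ^ n *
            ∑ κ : Fin n → Fin N, ∑ ρ : Equiv.Perm (Fin n),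
              sg ρ * ((∏ i, ⟪y i, e (κ i)⟫) * ∏ i, ⟪e (κ (ρ i)), x i⟫) := by
          congr 1
          rw [Finset.sum_congr rfl (fun ρ _ => Finset.mul_sum Finset.univ _ (sg ρ))]
          exact Finset.sum_comm
  -- the scalar identity
  have hscal : (N.factorial : ℂ)⁻¹ * ((N - n).factorial : ℂ) =
      (((N : ℂ) ^ n * ((N - n).factorial : ℂ)) / (N.factorial : ℂ)) *
        (((N - 1).factorial : ℂ) / (N.factorial : ℂ)) ^ n := by
    have hNfac : (N.factorial : ℂ) ≠ 0 := Nat.cast_ne_zero.mpr (Nat.factorial_ne_zero _)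
    have hkey : (N : ℂ) * ((N - 1).factorial : ℂ) = (N.factorial : ℂ) := by
      rw [← Nat.cast_mul]
      congr 1
      exact Nat.mul_factorial_pred (Nat.pos_iff_ne_zero.mp hNpos)
    have h1 : (((N : ℂ) ^ n * ((N - n).factorial : ℂ)) / (N.factorial : ℂ)) *
        (((N - 1).factorial : ℂ) / (N.factorial : ℂ)) ^ n
        = ((N - n).factorial : ℂ) / (N.factorial : ℂ) *
          (((N : ℂ) * ((N - 1).factorial : ℂ)) / (N.factorial : ℂ)) ^ n := by
      rw [div_pow, div_pow, mul_pow]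
      ring
    rw [h1, hkey, div_self hNfac, one_pow, mul_one, div_eq_mul_inv]
    ring
  -- conclude by density
  refine ext_of_dense htpn_dense _ _ ?_
  rintro v ⟨y, rfl⟩ w ⟨x, rfl⟩
  rw [hLfinal y x, hRmat y x, ← mul_assoc, ← mul_assoc, hscal]






end
end

section
/- If T is a trace class operator on H^{⊗N} satisfying T U_π = U_π T = sgn(π) T for all permutations π ∈ Π_N (fermionic symmetry), then for every n < N the partial trace T_{:n} on H^{⊗n} satisfies T_{:n} U_σ = U_σ T_{:n} = sgn(σ) T_{:n} for all σ ∈ Π_n. -/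
/- STATEMENT 17: If T is a trace class operator on H^{⊗N} with
   T U_π = U_π T = sgn(π) T for all π ∈ Π_N, then for n < N the partial
   trace T_{:n} satisfies T_{:n} U_σ = U_σ T_{:n} = sgn(σ) T_{:n} for all
   σ ∈ Π_n.

   HN models H^{⊗N} via tpN (permutation action UN), Hn models H^{⊗n} via
   tpn (permutation action Un); the partial trace ptr over the last N−n
   factors is characterized by its matrix elements along a Hilbert basis b
   of H via the map mixn, which models w ⊗ b_{z_1} ⊗ ⋯ ⊗ b_{z_{N−n}}. -/

noncomputable section

open scoped ENNReal
open ContinuousLinearMap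

local notation "⟪" x ", " y "⟫" => @inner ℂ _ _ x y

lemma exists_clm_of_inner_preserving {E F : Type*} [NormedAddCommGroup E]
    [InnerProductSpace ℂ E] [NormedAddCommGroup F] [InnerProductSpace ℂ F]
    (f : E → F) (hf : ∀ x y, ⟪f x, f y⟫ = ⟪x, y⟫) :
    ∃ g : E →L[ℂ] F, ∀ x, g x = f x := by
  have hadd : ∀ x y, f (x + y) = f x + f y := by
    intro x y
    have h : ⟪f (x + y) - (f x + f y), f (x + y) - (f x + f y)⟫ = 0 := by
      simp only [inner_sub_left, inner_sub_right, inner_add_left, inner_add_right, hf]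
      ring
    have h2 := inner_self_eq_zero.mp h
    rwa [sub_eq_zero] at h2
  have hsmul : ∀ (c : ℂ) (x : E), f (c • x) = c • f x := by
    intro c x
    have h : ⟪f (c • x) - c • f x, f (c • x) - c • f x⟫ = 0 := by
      simp only [inner_sub_left, inner_sub_right, inner_smul_left, inner_smul_right, hf]
      ring
    have h2 := inner_self_eq_zero.mp h
    rwa [sub_eq_zero] at h2
  have hnorm : ∀ x, ‖f x‖ = ‖x‖ := by
    intro x
    rw [@norm_eq_sqrt_re_inner ℂ, @norm_eq_sqrt_re_inner ℂ, hf]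
  refine ⟨LinearMap.mkContinuous ⟨⟨f, hadd⟩, hsmul⟩ 1 (fun x => ?_), fun x => rfl⟩
  simp [hnorm x]

noncomputable def traceNorm {H : Type*} [NormedAddCommGroup H]
    [InnerProductSpace ℂ H] (T : H →L[ℂ] H) : ℝ≥0∞ :=
  ⨆ (n : ℕ) (e : Fin n → H) (f : Fin n → H) (_ : Orthonormal ℂ e)
    (_ : Orthonormal ℂ f), ∑ i, (‖⟪T (e i), f i⟫‖₊ : ℝ≥0∞)

theorem partial_trace_preserves_fermionic_symmetry
    {H Hn HN : Type*}
    [NormedAddCommGroup H] [InnerProductSpace ℂ H] [CompleteSpace H]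
    [NormedAddCommGroup Hn] [InnerProductSpace ℂ Hn] [CompleteSpace Hn]
    [NormedAddCommGroup HN] [InnerProductSpace ℂ HN] [CompleteSpace HN]
    (n N : ℕ) (hnN : n < N)
    {J : Type} (b : HilbertBasis J ℂ H)
    (tpN : (Fin N → H) → HN)
    (htpN_inner : ∀ x y : Fin N → H, ⟪tpN x, tpN y⟫ = ∏ i, ⟪x i, y i⟫)
    (htpN_dense : Dense (Submodule.span ℂ (Set.range tpN) : Set HN))
    (UN : Equiv.Perm (Fin N) → (HN →L[ℂ] HN))
    (hUN : ∀ (π : Equiv.Perm (Fin N)) (x : Fin N → H),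
      UN π (tpN x) = tpN (fun i => x (π⁻¹ i)))
    (tpn : (Fin n → H) → Hn)
    (htpn_inner : ∀ x y : Fin n → H, ⟪tpn x, tpn y⟫ = ∏ i, ⟪x i, y i⟫)
    (htpn_dense : Dense (Submodule.span ℂ (Set.range tpn) : Set Hn))
    (Un : Equiv.Perm (Fin n) → (Hn →L[ℂ] Hn))
    (hUn : ∀ (σ : Equiv.Perm (Fin n)) (x : Fin n → H),
      Un σ (tpn x) = tpn (fun i => x (σ⁻¹ i)))
    -- the partial trace over the last N − n factors
    (mixn : Hn → (Fin (N - n) → J) → HN)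
    (hmixn_tp : ∀ (y : Fin n → H) (z : Fin (N - n) → J),
      mixn (tpn y) z =
        tpN (fun i => Fin.append y (fun t => b (z t)) (Fin.cast (by omega) i)))
    (hmixn_inner : ∀ (w x : Hn) (z z' : Fin (N - n) → J),
      ⟪mixn w z, mixn x z'⟫ = ⟪w, x⟫ * ∏ t, ⟪(b (z t) : H), b (z' t)⟫)
    (ptr : (HN →L[ℂ] HN) → (Hn →L[ℂ] Hn))
    (hptr : ∀ T : HN →L[ℂ] HN, traceNorm T ≠ ⊤ → ∀ w x : Hn,
      HasSum (fun z : Fin (N - n) → J => ⟪T (mixn w z), mixn x z⟫)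
        ⟪ptr T w, x⟫)
    -- T is trace class with fermionic symmetry
    (T : HN →L[ℂ] HN) (hTtc : traceNorm T ≠ ⊤)
    (hTsym : ∀ π : Equiv.Perm (Fin N),
      T ∘L UN π = ((Equiv.Perm.sign π : ℤ) : ℂ) • T ∧
      UN π ∘L T = ((Equiv.Perm.sign π : ℤ) : ℂ) • T) :
    ∀ σ : Equiv.Perm (Fin n),
      ptr T ∘L Un σ = ((Equiv.Perm.sign σ : ℤ) : ℂ) • ptr T ∧
      Un σ ∘L ptr T = ((Equiv.Perm.sign σ : ℤ) : ℂ) • ptr T := by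
  classical
  have hm : N = n + (N - n) := by omega
  -- embedding of the small permutation group
  let ee : Fin n ⊕ Fin (N - n) ≃ Fin N := finSumFinEquiv.trans (finCongr hm.symm)
  let P : Equiv.Perm (Fin n) → Equiv.Perm (Fin N) := fun σ =>
    ee.permCongr (Equiv.sumCongr σ (Equiv.refl (Fin (N - n))))
  have hsign : ∀ σ : Equiv.Perm (Fin n),
      ((Equiv.Perm.sign (P σ) : ℤ) : ℂ) = ((Equiv.Perm.sign σ : ℤ) : ℂ) := by
    intro σ
    rw [show Equiv.Perm.sign (P σ) = Equiv.Perm.sign σ by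
      simp [P, Equiv.Perm.sign_permCongr, Equiv.Perm.sign_sumCongr]]
  have hinv : ∀ σ : Equiv.Perm (Fin n), (P σ)⁻¹ = P σ⁻¹ := by
    intro σ
    apply inv_eq_of_mul_eq_one_right
    ext i
    obtain ⟨s, rfl⟩ := ee.surjective i
    cases s <;>
      simp [P, Equiv.permCongr_apply, Equiv.Perm.mul_apply]
  have hcast : ∀ s : Fin n ⊕ Fin (N - n), Fin.cast hm (ee s) = finSumFinEquiv s := by
    intro s
    simp [ee, Fin.ext_iff]
  have happ : ∀ (σ : Equiv.Perm (Fin n)) (y : Fin n → H) (c : Fin (N - n) → H) (i : Fin N),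
      Fin.append y c (Fin.cast hm ((P σ)⁻¹ i)) =
      Fin.append (fun j => y (σ⁻¹ j)) c (Fin.cast hm i) := by
    intro σ y c i
    rw [hinv]
    obtain ⟨s, rfl⟩ := ee.surjective i
    have hP : ∀ s, (P σ⁻¹) (ee s) = ee (Equiv.sumCongr σ⁻¹ (Equiv.refl (Fin (N - n))) s) := by
      intro s; simp [P, Equiv.permCongr_apply]
    rw [hP, hcast, hcast]
    cases s with
    | inl a =>
      simp only [Equiv.sumCongr_apply, Sum.map_inl, finSumFinEquiv_apply_left,
        Fin.append_left]
    | inr t =>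
      simp only [Equiv.sumCongr_apply, Sum.map_inr, id_eq, finSumFinEquiv_apply_right,
        Fin.append_right, Equiv.refl_apply]
  have hb1 : ∀ j : J, ⟪(b j : H), b j⟫ = 1 := by
    intro j
    exact (orthonormal_iff_ite.mp b.orthonormal j j).trans (by simp)
  have hfz : ∀ (z : Fin (N - n) → J) (w x : Hn), ⟪mixn w z, mixn x z⟫ = ⟪w, x⟫ := by
    intro z w x
    rw [hmixn_inner]
    simp [hb1, b.orthonormal.1]
  choose M hM using fun z : Fin (N - n) → J =>
    exists_clm_of_inner_preserving (fun w => mixn w z) (fun w x => hfz z w x)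
  -- the intertwining relation
  have hAA : ∀ (σ : Equiv.Perm (Fin n)) (z : Fin (N - n) → J) (w : Hn),
      UN (P σ) (mixn w z) = mixn (Un σ w) z := by
    intro σ z
    have h : (UN (P σ)).comp (M z) = (M z).comp (Un σ) := by
      apply ContinuousLinearMap.ext_on htpn_dense
      rintro _ ⟨y, rfl⟩
      simp only [ContinuousLinearMap.comp_apply, hM]
      rw [hUn, hmixn_tp, hmixn_tp, hUN]
      congr 1
      funext i
      exact happ σ y _ i
    intro w
    have h2 := congrArg (fun (A : Hn →L[ℂ] HN) => A w) h
    simpa only [ContinuousLinearMap.comp_apply, hM] using h2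
  -- adjoint relations for Un and UN
  have hadjn : ∀ (σ : Equiv.Perm (Fin n)) (u v : Hn), ⟪Un σ u, v⟫ = ⟪u, Un σ⁻¹ v⟫ := by
    intro σ u v
    have key : ContinuousLinearMap.adjoint (Un σ) = Un σ⁻¹ := by
      apply ContinuousLinearMap.ext_on htpn_dense
      rintro _ ⟨y, rfl⟩
      have h2 : (innerSL ℂ (ContinuousLinearMap.adjoint (Un σ) (tpn y))) =
          (innerSL ℂ (Un σ⁻¹ (tpn y))) := by
        apply ContinuousLinearMap.ext_on htpn_dense
        rintro _ ⟨x, rfl⟩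
        simp only [innerSL_apply_apply]
        rw [ContinuousLinearMap.adjoint_inner_left, hUn, hUn, htpn_inner, htpn_inner]
        refine Fintype.prod_equiv σ⁻¹ _ _ (fun i => ?_)
        simp
      exact ext_inner_right ℂ (fun v => by
        have h3 := congrArg (fun (A : Hn →L[ℂ] ℂ) => A v) h2
        simpa using h3)
    rw [← key, ContinuousLinearMap.adjoint_inner_right]
  have hadjN : ∀ (ρ : Equiv.Perm (Fin N)) (u v : HN), ⟪UN ρ u, v⟫ = ⟪u, UN ρ⁻¹ v⟫ := by
    intro ρ u v
    have key : ContinuousLinearMap.adjoint (UN ρ) = UN ρ⁻¹ := by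
      apply ContinuousLinearMap.ext_on htpN_dense
      rintro _ ⟨y, rfl⟩
      have h2 : (innerSL ℂ (ContinuousLinearMap.adjoint (UN ρ) (tpN y))) =
          (innerSL ℂ (UN ρ⁻¹ (tpN y))) := by
        apply ContinuousLinearMap.ext_on htpN_dense
        rintro _ ⟨x, rfl⟩
        simp only [innerSL_apply_apply]
        rw [ContinuousLinearMap.adjoint_inner_left, hUN, hUN, htpN_inner, htpN_inner]
        refine Fintype.prod_equiv ρ⁻¹ _ _ (fun i => ?_)
        simp
      exact ext_inner_right ℂ (fun v => by
        have h3 := congrArg (fun (A : HN →L[ℂ] ℂ) => A v) h2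
        simpa using h3)
    rw [← key, ContinuousLinearMap.adjoint_inner_right]
  intro σ
  have hconj : (starRingEnd ℂ) ((Equiv.Perm.sign σ : ℤ) : ℂ) = ((Equiv.Perm.sign σ : ℤ) : ℂ) :=
    map_intCast _ _
  constructor
  · refine ContinuousLinearMap.ext (fun w => ext_inner_right ℂ (fun x => ?_))
    have h1 := hptr T hTtc (Un σ w) x
    have h2 := (hptr T hTtc w x).mul_left ((Equiv.Perm.sign σ : ℤ) : ℂ)
    have hfun : (fun z : Fin (N - n) → J => ⟪T (mixn (Un σ w) z), mixn x z⟫) =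
        (fun z : Fin (N - n) → J => ((Equiv.Perm.sign σ : ℤ) : ℂ) * ⟪T (mixn w z), mixn x z⟫) := by
      funext z
      rw [← hAA σ z w, show T (UN (P σ) (mixn w z)) = (T ∘L UN (P σ)) (mixn w z) from rfl,
        (hTsym (P σ)).1]
      simp only [ContinuousLinearMap.smul_apply, inner_smul_left, hsign σ, hconj]
    rw [hfun] at h1
    have h3 := h1.unique h2
    simp only [ContinuousLinearMap.comp_apply, ContinuousLinearMap.smul_apply,
      inner_smul_left, hconj]
    exact h3
  · refine ContinuousLinearMap.ext (fun w => ext_inner_right ℂ (fun x => ?_))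
    have h1 := hptr T hTtc w (Un σ⁻¹ x)
    have h2 := (hptr T hTtc w x).mul_left ((Equiv.Perm.sign σ : ℤ) : ℂ)
    have hfun : (fun z : Fin (N - n) → J => ⟪T (mixn w z), mixn (Un σ⁻¹ x) z⟫) =
        (fun z : Fin (N - n) → J => ((Equiv.Perm.sign σ : ℤ) : ℂ) * ⟪T (mixn w z), mixn x z⟫) := by
      funext z
      rw [← hAA σ⁻¹ z x, show P σ⁻¹ = (P σ)⁻¹ from (hinv σ).symm, ← hadjN (P σ),
        show UN (P σ) (T (mixn w z)) = (UN (P σ) ∘L T) (mixn w z) from rfl,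
        (hTsym (P σ)).2]
      simp only [ContinuousLinearMap.smul_apply, inner_smul_left, hsign σ, hconj]
    rw [hfun] at h1
    have h3 := h1.unique h2
    simp only [ContinuousLinearMap.comp_apply, ContinuousLinearMap.smul_apply,
      inner_smul_left, hconj]
    rw [hadjn σ (ptr T w) x]
    exact h3

end
end
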